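/- Let 0 < α < 1 and ρ > 0, and set λ₀ = ρ/√(1−α) and θ₀ = θ(λ₀). Then θ is odd, strictly positive on (0,∞), strictly increasing on [0, λ₀], strictly decreasing on [λ₀, ∞), tends to 0 at +∞, and attains its maximum θ₀ > 0 on [0,∞) exactly at λ₀. Consequently: (i) if R > θ₀ then the phase ψ_R has no stationary point and |ψ_R′(λ)| ≥ R − θ₀ for all λ ∈ ℝ; (ii) if R = θ₀ then λ₀ is the unique stationary point of ψ_R in [0,∞) and both ψ_R′ and ψ_R″ vanish at λ₀. -/

import Mathlib

/-- `θ(λ) = α·λ·(λ² + ρ²)^{−(1−α/2)}`. -/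
noncomputable def theta (α ρ lam : ℝ) : ℝ :=
  α * lam * (lam ^ 2 + ρ ^ 2) ^ (-(1 - α / 2))

/-- The phase `ψ_R(λ) = (λ² + ρ²)^{α/2} − R·λ`, so that `ψ_R′(λ) = θ(λ) − R`. -/
noncomputable def psi (α ρ R lam : ℝ) : ℝ :=
  (lam ^ 2 + ρ ^ 2) ^ (α / 2) - R * lam

lemma u_pos {ρ : ℝ} (hρ : 0 < ρ) (lam : ℝ) : 0 < lam ^ 2 + ρ ^ 2 := by positivity

lemma hasDerivAt_psi {α ρ : ℝ} (hρ : 0 < ρ) (R lam : ℝ) :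
    HasDerivAt (psi α ρ R) (theta α ρ lam - R) lam := by
  have h1 : HasDerivAt (fun l : ℝ => l ^ 2 + ρ ^ 2) (2 * lam) lam := by
    simpa using (hasDerivAt_pow 2 lam).add_const (ρ ^ 2)
  have h2 := h1.rpow_const (p := α / 2) (Or.inl (u_pos hρ lam).ne')
  have h3 : HasDerivAt (fun l : ℝ => R * l) R lam := by
    simpa using (hasDerivAt_id lam).const_mul R
  have h4 := h2.sub h3
  refine h4.congr_deriv ?_
  have he : -(1 - α / 2) = α / 2 - 1 := by ring
  rw [theta, he]; ring

lemma deriv_psi {α ρ : ℝ} (hρ : 0 < ρ) (R : ℝ) :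
    deriv (psi α ρ R) = fun lam => theta α ρ lam - R :=
  funext fun lam => (hasDerivAt_psi hρ R lam).deriv

lemma hasDerivAt_theta {α ρ : ℝ} (hρ : 0 < ρ) (lam : ℝ) :
    HasDerivAt (theta α ρ)
      (α * (ρ ^ 2 - (1 - α) * lam ^ 2) * (lam ^ 2 + ρ ^ 2) ^ (α / 2 - 2)) lam := by
  have h1 : HasDerivAt (fun l : ℝ => l ^ 2 + ρ ^ 2) (2 * lam) lam := by
    simpa using (hasDerivAt_pow 2 lam).add_const (ρ ^ 2)
  have h2 := h1.rpow_const (p := -(1 - α / 2)) (Or.inl (u_pos hρ lam).ne')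
  have h3 : HasDerivAt (fun l : ℝ => α * l) α lam := by
    simpa using (hasDerivAt_id lam).const_mul α
  have h4 := h3.mul h2
  refine h4.congr_deriv ?_
  have he : -(1 - α / 2) - 1 = α / 2 - 2 := by ring
  have hu : (lam ^ 2 + ρ ^ 2) ^ (-(1 - α / 2)) =
      (lam ^ 2 + ρ ^ 2) ^ (α / 2 - 2) * (lam ^ 2 + ρ ^ 2) := by
    rw [← Real.rpow_add_one (u_pos hρ lam).ne']
    congr 1; ring
  rw [he, hu]; ring

lemma theta_cont {α ρ : ℝ} (hρ : 0 < ρ) : Continuous (theta α ρ) := by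
  apply Continuous.mul (by continuity)
  exact Continuous.rpow_const (by continuity) fun x => Or.inl (u_pos hρ x).ne'

theorem stmt3 (α ρ : ℝ) (hα0 : 0 < α) (hα1 : α < 1) (hρ : 0 < ρ)
    (lam0 θ0 : ℝ) (hlam0 : lam0 = ρ / Real.sqrt (1 - α)) (hθ0 : θ0 = theta α ρ lam0) :
    -- θ is odd
    (∀ lam : ℝ, theta α ρ (-lam) = - theta α ρ lam) ∧
    -- θ is strictly positive on (0, ∞)
    (∀ lam : ℝ, 0 < lam → 0 < theta α ρ lam) ∧
    -- θ is strictly increasing on [0, λ₀] and strictly decreasing on [λ₀, ∞)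
    StrictMonoOn (theta α ρ) (Set.Icc 0 lam0) ∧
    StrictAntiOn (theta α ρ) (Set.Ici lam0) ∧
    -- θ tends to 0 at +∞
    Filter.Tendsto (theta α ρ) Filter.atTop (nhds 0) ∧
    -- θ attains its maximum θ₀ > 0 on [0, ∞) exactly at λ₀
    0 < θ0 ∧
    (∀ lam : ℝ, 0 ≤ lam → theta α ρ lam ≤ θ0 ∧ (theta α ρ lam = θ0 ↔ lam = lam0)) ∧
    -- (i) if R > θ₀ then ψ_R has no stationary point and |ψ_R′| ≥ R − θ₀
    (∀ R : ℝ, θ0 < R →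
      (∀ lam : ℝ, deriv (psi α ρ R) lam ≠ 0) ∧
      (∀ lam : ℝ, R - θ0 ≤ |deriv (psi α ρ R) lam|)) ∧
    -- (ii) if R = θ₀ then λ₀ is the unique stationary point of ψ_R in [0, ∞),
    -- and both ψ_R′ and ψ_R″ vanish there
    (deriv (psi α ρ θ0) lam0 = 0 ∧ iteratedDeriv 2 (psi α ρ θ0) lam0 = 0 ∧
      ∀ lam : ℝ, 0 ≤ lam → deriv (psi α ρ θ0) lam = 0 → lam = lam0) := by
  have h1α : 0 < 1 - α := by linarith
  have hsq : Real.sqrt (1 - α) > 0 := Real.sqrt_pos.mpr h1α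
  have hlam0_pos : 0 < lam0 := by rw [hlam0]; positivity
  have hlam0_sq : (1 - α) * lam0 ^ 2 = ρ ^ 2 := by
    rw [hlam0, div_pow, Real.sq_sqrt h1α.le]
    field_simp
  -- oddness
  have hodd : ∀ lam : ℝ, theta α ρ (-lam) = - theta α ρ lam := by
    intro lam
    have h : (-lam) ^ 2 = lam ^ 2 := by ring
    unfold theta; rw [h]; ring
  -- positivity
  have hpos : ∀ lam : ℝ, 0 < lam → 0 < theta α ρ lam := by
    intro lam hl
    have := u_pos hρ lam
    unfold theta; positivity
  -- deriv of theta
  have hdθ : ∀ lam : ℝ, deriv (theta α ρ) lam =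
      α * (ρ ^ 2 - (1 - α) * lam ^ 2) * (lam ^ 2 + ρ ^ 2) ^ (α / 2 - 2) :=
    fun lam => (hasDerivAt_theta hρ lam).deriv
  -- strict mono on [0, lam0]
  have hmono : StrictMonoOn (theta α ρ) (Set.Icc 0 lam0) := by
    apply strictMonoOn_of_deriv_pos (convex_Icc _ _) (theta_cont hρ).continuousOn
    intro x hx
    rw [interior_Icc] at hx
    rw [hdθ]
    have hx0 : 0 ≤ x := hx.1.le
    have hxs : (1 - α) * x ^ 2 < ρ ^ 2 := by
      rw [← hlam0_sq]
      have : x ^ 2 < lam0 ^ 2 := by nlinarith [hx.2, hx.1]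
      nlinarith
    have := u_pos hρ x
    have h2 : (0:ℝ) < (x ^ 2 + ρ ^ 2) ^ (α / 2 - 2) := Real.rpow_pos_of_pos this _
    exact mul_pos (mul_pos hα0 (by linarith)) h2
  -- strict anti on [lam0, ∞)
  have hanti : StrictAntiOn (theta α ρ) (Set.Ici lam0) := by
    apply strictAntiOn_of_deriv_neg (convex_Ici _) (theta_cont hρ).continuousOn
    intro x hx
    rw [interior_Ici] at hx
    rw [hdθ]
    have hxs : ρ ^ 2 < (1 - α) * x ^ 2 := by
      rw [← hlam0_sq]
      have : lam0 ^ 2 < x ^ 2 := by nlinarith [Set.mem_Ioi.mp hx]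
      nlinarith
    have := u_pos hρ x
    have h2 : (0:ℝ) < (x ^ 2 + ρ ^ 2) ^ (α / 2 - 2) := Real.rpow_pos_of_pos this _
    exact mul_neg_of_neg_of_pos (mul_neg_of_pos_of_neg hα0 (by linarith)) h2
  -- tendsto 0
  have htend : Filter.Tendsto (theta α ρ) Filter.atTop (nhds 0) := by
    have hub : ∀ᶠ x : ℝ in Filter.atTop, theta α ρ x ≤ α * x ^ (α - 1) := by
      filter_upwards [Filter.eventually_gt_atTop (0:ℝ)] with x hx
      have hux := u_pos hρ x
      have hle : (x ^ 2 + ρ ^ 2) ^ (-(1 - α / 2)) ≤ (x ^ 2) ^ (-(1 - α / 2)) := by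
        apply Real.rpow_le_rpow_of_nonpos (by positivity) (by nlinarith) (by linarith)
      have hxx : (x ^ 2 : ℝ) ^ (-(1 - α / 2)) = x ^ (α - 2) := by
        rw [← Real.rpow_natCast x 2, ← Real.rpow_mul hx.le]
        congr 1; push_cast; ring
      have : theta α ρ x ≤ α * x * x ^ (α - 2) := by
        rw [theta]
        have := mul_le_mul_of_nonneg_left (hxx ▸ hle) (by positivity : (0:ℝ) ≤ α * x)
        linarith
      calc theta α ρ x ≤ α * x * x ^ (α - 2) := this
        _ = α * x ^ (α - 1) := by
            have h : x ^ (α - 2) * x = x ^ (α - 1) := by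
              rw [← Real.rpow_add_one hx.ne']; congr 1; ring
            rw [mul_assoc, mul_comm x (x ^ (α - 2)), h]
    have hlb : ∀ᶠ x : ℝ in Filter.atTop, (0:ℝ) ≤ theta α ρ x := by
      filter_upwards [Filter.eventually_gt_atTop (0:ℝ)] with x hx
      exact (hpos x hx).le
    have h0 : Filter.Tendsto (fun x : ℝ => α * x ^ (α - 1)) Filter.atTop (nhds 0) := by
      have := (tendsto_rpow_neg_atTop (y := 1 - α) h1α).const_mul α
      simpa [neg_sub] using this
    exact tendsto_of_tendsto_of_tendsto_of_le_of_le' tendsto_const_nhds h0 hlb hub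
  -- max
  have hθ0pos : 0 < θ0 := hθ0 ▸ hpos lam0 hlam0_pos
  have hmax : ∀ lam : ℝ, 0 ≤ lam →
      theta α ρ lam ≤ θ0 ∧ (theta α ρ lam = θ0 ↔ lam = lam0) := by
    intro lam hl
    rcases lt_trichotomy lam lam0 with h | h | h
    · have hlt : theta α ρ lam < θ0 := by
        rw [hθ0]
        exact hmono ⟨hl, h.le⟩ ⟨hlam0_pos.le, le_refl _⟩ h
      exact ⟨hlt.le, by constructor <;> intro hh <;> [exact absurd hh hlt.ne; exact absurd hh h.ne]⟩
    · subst h; exact ⟨hθ0.ge, by simp [hθ0]⟩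
    · have hlt : theta α ρ lam < θ0 := by
        rw [hθ0]
        exact hanti (Set.mem_Ici.mpr le_rfl) (Set.mem_Ici.mpr h.le) h
      exact ⟨hlt.le, by constructor <;> intro hh <;> [exact absurd hh hlt.ne; exact absurd hh h.ne']⟩
  have hle_all : ∀ lam : ℝ, theta α ρ lam ≤ θ0 := by
    intro lam
    rcases le_or_gt 0 lam with h | h
    · exact (hmax lam h).1
    · have : theta α ρ lam = - theta α ρ (-lam) := by rw [← hodd]; simp
      rw [this]
      have := hpos (-lam) (by linarith)
      linarith
  refine ⟨hodd, hpos, hmono, hanti, htend, hθ0pos, hmax, ?_, ?_, ?_, ?_⟩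
  · intro R hR
    constructor
    · intro lam
      rw [deriv_psi hρ]
      have := hle_all lam
      simp only
      intro hc
      linarith [sub_eq_zero.mp hc ▸ this]
    · intro lam
      rw [deriv_psi hρ]
      have := hle_all lam
      simp only
      rw [abs_of_nonpos (by linarith)]
      linarith
  · rw [deriv_psi hρ]; simp [hθ0]
  · rw [iteratedDeriv_succ, iteratedDeriv_one, deriv_psi hρ]
    have : deriv (fun lam => theta α ρ lam - θ0) lam0 = deriv (theta α ρ) lam0 := by
      simp [deriv_sub_const]
    rw [this, hdθ, hlam0_sq]
    ring
  · intro lam hl hd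
    rw [deriv_psi hρ] at hd
    simp only at hd
    have : theta α ρ lam = θ0 := by linarith [sub_eq_zero.mp hd]
    exact ((hmax lam hl).2).mp this
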